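/- Let C_n be the cycle graph on n ≥ 3 vertices and let f be a divisor on C_n. Then ρ(f) = −1 if deg(f) ≤ −1; ρ(f) = −1 if deg(f) = 0 and f is bad; ρ(f) = 0 if deg(f) = 0 and f is good; and ρ(f) = deg(f) − 1 if deg(f) ≥ 1. -/

import Mathlib

/-- A finite loopless multigraph on vertex set `V`, given by its symmetric
edge-multiplicity function `e`. -/
structure Multigraph (V : Type*) [Fintype V] [DecidableEq V] where
  e : V → V → ℕ
  symm : ∀ u v, e u v = e v u
  loopless : ∀ v, e v v = 0

namespace Multigraph

variable {V : Type*} [Fintype V] [DecidableEq V]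

/-- The degree of a vertex of a multigraph. -/
def vdeg (G : Multigraph V) (v : V) : ℕ := ∑ u, G.e v u

/-- The number of edges of a multigraph. -/
def edgeCount (G : Multigraph V) : ℕ := (∑ u, ∑ v, G.e u v) / 2

/-- The underlying simple graph (adjacency) of a multigraph. -/
def toSimple (G : Multigraph V) : SimpleGraph V where
  Adj u v := G.e u v ≠ 0
  symm := by constructor; intro u v h; show G.e v u ≠ 0; rwa [G.symm]
  loopless := by constructor; intro v h; exact h (G.loopless v)

/-- A multigraph is connected if its underlying simple graph is. -/
def Connected (G : Multigraph V) : Prop := G.toSimple.Connected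

/-- The degree of a divisor `f : V → ℤ`. -/
def degree (f : V → ℤ) : ℤ := ∑ v, f v

/-- A divisor is effective if all its values are nonnegative. -/
def Effective (f : V → ℤ) : Prop := ∀ v, 0 ≤ f v

/-- The divisor `x · Δ_G`, where `Δ_G` is the Laplacian matrix of `G`. -/
def lapApply (G : Multigraph V) (x : V → ℤ) : V → ℤ :=
  fun v => x v * (G.vdeg v : ℤ) - ∑ u, x u * (G.e u v : ℤ)

/-- Linear equivalence of divisors: `g = f + x Δ_G` for some `x : V → ℤ`. -/
def LinEquiv (G : Multigraph V) (f g : V → ℤ) : Prop :=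
  ∃ x : V → ℤ, g = f + G.lapApply x

/-- A divisor is L-effective if it is linearly equivalent to an effective divisor. -/
def LEffective (G : Multigraph V) (f : V → ℤ) : Prop :=
  ∃ g : V → ℤ, G.LinEquiv f g ∧ Effective g

/-- The Baker–Norine rank of a divisor: `-1` if `f` is not L-effective, and
otherwise the largest `r ≥ 0` such that `f - λ` is L-effective for every
effective divisor `λ` of degree `r`. -/
noncomputable def rank (G : Multigraph V) (f : V → ℤ) : ℤ :=
  sSup ({-1} ∪ {r : ℤ | 0 ≤ r ∧
    ∀ l : V → ℤ, Effective l → degree l = r → G.LEffective (f - l)})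

/-- The divisor `ε_v`. -/
def epsDiv (v : V) : V → ℤ := fun u => if u = v then 1 else 0

/-- A tree: a connected acyclic (multi)graph. -/
def IsTree (G : Multigraph V) : Prop :=
  G.toSimple.IsTree ∧ ∀ u v, G.e u v ≤ 1

/-- A cycle graph: connected, and every vertex has degree 2. -/
def IsCycleGraph (G : Multigraph V) : Prop :=
  G.Connected ∧ ∀ v, G.vdeg v = 2

/-- An edge: two vertices joined by a single edge. -/
def IsEdgeGraph (G : Multigraph V) : Prop :=
  Fintype.card V = 2 ∧ G.Connected ∧ ∀ u v, G.e u v ≤ 1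

/-- A good divisor (on a cycle): degree `0` and linearly equivalent to `0`. -/
def Good (G : Multigraph V) (f : V → ℤ) : Prop :=
  degree f = 0 ∧ G.LinEquiv f 0

/-- A bad divisor (on a cycle): degree `0` and not linearly equivalent to `0`. -/
def Bad (G : Multigraph V) (f : V → ℤ) : Prop :=
  degree f = 0 ∧ ¬ G.LinEquiv f 0

/-- The induced sub-multigraph on a finite set `S` of vertices. -/
def induce (G : Multigraph V) (S : Finset V) : Multigraph {x // x ∈ S} where
  e a b := G.e a.1 b.1
  symm := fun a b => G.symm a.1 b.1
  loopless := fun a => G.loopless a.1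

/-- `v` decomposes the induced subgraph of `G` on `S` into the induced
subgraphs on `V1` and `U`: they cover `S`, meet exactly in `v`, are both
connected, and there is no edge between `V1 \ {v}` and `U \ {v}`. -/
def DecompOn (G : Multigraph V) (S : Finset V) (v : V) (V1 U : Finset V) : Prop :=
  V1 ∪ U = S ∧ V1 ∩ U = {v} ∧
  (G.induce V1).Connected ∧ (G.induce U).Connected ∧
  ∀ a ∈ V1, ∀ b ∈ U, a ≠ v → b ≠ v → G.e a b = 0

/-- `v` decomposes `G` into the induced subgraphs on `V1` and `U`. -/
def Decomp (G : Multigraph V) (v : V) (V1 U : Finset V) : Prop :=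
  G.DecompOn Finset.univ v V1 U

/-- The contraction `f_{G/H}` of a divisor `f`, where `H = G(U)` and
`G/H = G(V1)`, the cut vertex being `v`. -/
def contractDiv (f : V → ℤ) (v : V) (V1 U : Finset V) : {x // x ∈ V1} → ℤ :=
  fun u => if u.1 = v then ∑ w ∈ U, f w else f u.1

/-- The zero `f_{N(H)}` of a divisor `f`, where `H = G(U)`, the cut vertex
being `v`. -/
def zeroDiv (f : V → ℤ) (v : V) (U : Finset V) : {x // x ∈ U} → ℤ :=
  fun u => if u.1 = v then - ∑ w ∈ U.erase v, f w else f u.1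

/-- `ε_v` as a divisor on an induced subgraph. -/
def epsDivOn (S : Finset V) (v : V) : {x // x ∈ S} → ℤ :=
  fun u => if u.1 = v then 1 else 0

/-- A simple cycle of `G`, given as a sub-multigraph (an edge-multiplicity
function bounded by that of `G`) which is connected on its support and in
which every vertex of its (nonempty) support has degree 2. -/
def IsCycleSubgraph (G : Multigraph V) (h : V → V → ℕ) : Prop :=
  (∀ u v, h u v ≤ G.e u v) ∧ (∀ u v, h u v = h v u) ∧
  (∀ v, (∑ u, h v u = 0) ∨ (∑ u, h v u = 2)) ∧
  (∃ v, ∑ u, h v u ≠ 0) ∧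
  (∀ v w, (∑ u, h v u ≠ 0) → (∑ u, h w u ≠ 0) →
    Relation.ReflTransGen (fun a b => h a b ≠ 0) v w)

/-- The vertex support of a sub-multigraph. -/
def cycleSupport (h : V → V → ℕ) : Finset V :=
  Finset.univ.filter (fun v => ∑ u, h v u ≠ 0)

/-- A cactus: a connected multigraph in which any two distinct simple cycles
have at most one vertex in common (in particular every edge has multiplicity
at most 2, since parallel edges form 2-cycles). -/
def IsCactus (G : Multigraph V) : Prop :=
  G.Connected ∧ (∀ u v, G.e u v ≤ 2) ∧
  ∀ h₁ h₂ : V → V → ℕ, G.IsCycleSubgraph h₁ → G.IsCycleSubgraph h₂ → h₁ ≠ h₂ →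
    (cycleSupport h₁ ∩ cycleSupport h₂).card ≤ 1

/-- One step of a block elimination scheme: `G(S')` is obtained from `G(S)`
by contracting a free block (an edge or a cycle) `G(U)` at the vertex `v`. -/
def BlockStep (G : Multigraph V) (S S' : Finset V) : Prop :=
  ∃ (v : V) (U : Finset V), G.DecompOn S v S' U ∧
    ((G.induce U).IsEdgeGraph ∨ (G.induce U).IsCycleGraph)

/-- A block elimination scheme: a sequence of contractions of free blocks,
starting from `G` and ending at a single vertex. -/
def HasBlockEliminationScheme (G : Multigraph V) : Prop :=
  ∃ (k : ℕ) (S : ℕ → Finset V), S 0 = Finset.univ ∧ (S k).card = 1 ∧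
    ∀ i < k, G.BlockStep (S i) (S (i + 1))

end Multigraph

open Multigraph

variable {V : Type*} [Fintype V] [DecidableEq V]


set_option linter.unusedSectionVars false
set_option maxHeartbeats 1000000

namespace CycleAux
variable {n : ℕ} [NeZero n]

def lap' (y : ZMod n → ℤ) : ZMod n → ℤ := fun i => 2 * y i - y (i + 1) - y (i - 1)

def lapHom : (ZMod n → ℤ) →+ (ZMod n → ℤ) where
  toFun := lap'
  map_zero' := by funext i; simp [lap']
  map_add' := by intro a b; funext i; simp [lap']; ring

def Mu (F : ZMod n → ℤ) : ZMod n := ∑ i, (i : ZMod n) * ((F i : ℤ) : ZMod n)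
def Dg (F : ZMod n → ℤ) : ℤ := ∑ i, F i

def eps (i : ZMod n) : ZMod n → ℤ := fun j => if j = i then 1 else 0

lemma Dg_sub (F G : ZMod n → ℤ) : Dg (F - G) = Dg F - Dg G := by
  simp [Dg, Finset.sum_sub_distrib]

lemma Mu_sub (F G : ZMod n → ℤ) : Mu (F - G) = Mu F - Mu G := by
  simp [Mu, ← Finset.sum_sub_distrib, mul_sub]

lemma Dg_lap' (y : ZMod n → ℤ) : Dg (lap' y) = 0 := by
  have h1 : ∑ i : ZMod n, y (i + 1) = ∑ i : ZMod n, y i :=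
    Equiv.sum_comp (Equiv.addRight 1) y
  have h2 : ∑ i : ZMod n, y (i - 1) = ∑ i : ZMod n, y i :=
    Equiv.sum_comp (Equiv.subRight 1) y
  simp only [Dg, lap', Finset.sum_sub_distrib, h1, h2, two_mul, Finset.sum_add_distrib]
  ring

lemma Mu_lap' (y : ZMod n → ℤ) : Mu (lap' y) = 0 := by
  have h1 : ∑ i : ZMod n, (i : ZMod n) * ((y (i + 1) : ℤ) : ZMod n)
      = ∑ i : ZMod n, ((i : ZMod n) - 1) * ((y i : ℤ) : ZMod n) := by
    have := Equiv.sum_comp (Equiv.addRight 1) (fun j => (j - 1) * ((y j : ℤ) : ZMod n))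
    simpa using this
  have h2 : ∑ i : ZMod n, (i : ZMod n) * ((y (i - 1) : ℤ) : ZMod n)
      = ∑ i : ZMod n, ((i : ZMod n) + 1) * ((y i : ℤ) : ZMod n) := by
    have := Equiv.sum_comp (Equiv.subRight 1) (fun j => (j + 1) * ((y j : ℤ) : ZMod n))
    simpa using this
  have expand : ∀ i : ZMod n, (i : ZMod n) * ((lap' y i : ℤ) : ZMod n)
      = 2 * (i * ((y i : ℤ) : ZMod n)) - i * ((y (i + 1) : ℤ) : ZMod n)
        - i * ((y (i - 1) : ℤ) : ZMod n) := by
    intro i; simp only [lap']; push_cast; ring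
  calc Mu (lap' y) = ∑ i : ZMod n, (2 * (i * ((y i : ℤ) : ZMod n))
        - i * ((y (i + 1) : ℤ) : ZMod n) - i * ((y (i - 1) : ℤ) : ZMod n)) :=
        Finset.sum_congr rfl (fun i _ => expand i)
    _ = 0 := by
        simp only [Finset.sum_sub_distrib, h1, h2, ← Finset.mul_sum]
        simp only [sub_mul, add_mul, one_mul, Finset.sum_sub_distrib, Finset.sum_add_distrib]
        ring

lemma lap'_neg_eps (i : ZMod n) :
    lap' (-eps i) = eps (i + 1) + eps (i - 1) - 2 • eps i := by
  funext j
  have hb : (j + 1 = i) = (j = i - 1) :=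
    propext ⟨fun h => eq_sub_of_add_eq h, fun h => by rw [h]; exact sub_add_cancel i 1⟩
  have hc : (j - 1 = i) = (j = i + 1) :=
    propext ⟨fun h => eq_add_of_sub_eq h, fun h => by rw [h]; exact add_sub_cancel_right i 1⟩
  simp only [lap', eps, Pi.neg_apply, Pi.add_apply, Pi.sub_apply, smul_eq_mul,
    Pi.smul_apply, hb, hc]
  ring

def Lam : AddSubgroup (ZMod n → ℤ) := (lapHom (n := n)).range

lemma lap'_exists (F : ZMod n → ℤ) (hD : Dg F = 0) (hM : Mu F = 0) :
    ∃ y, F = lap' y := by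
  classical
  haveI : (Lam (n := n)).Normal := AddSubgroup.normal_of_isAddCommutative _
  set π : (ZMod n → ℤ) →+ ((ZMod n → ℤ) ⧸ (Lam (n := n))) := QuotientAddGroup.mk' _ with hπ
  set c : ZMod n → ((ZMod n → ℤ) ⧸ (Lam (n := n))) := fun i => π (eps i) with hc
  have smul_sum : ∀ (x : (ZMod n → ℤ) ⧸ (Lam (n := n))) (g : ZMod n → ℤ),
      ∑ i : ZMod n, g i • x = (∑ i : ZMod n, g i) • x := by
    intro x g
    exact (map_sum (zmultiplesHom _ x) g Finset.univ).symm
  have rel : ∀ i : ZMod n, c (i + 1) - c i = c i - c (i - 1) := by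
    intro i
    have hmem : eps (i + 1) + eps (i - 1) - 2 • eps i ∈ Lam (n := n) :=
      ⟨-eps i, lap'_neg_eps i⟩
    have h0 : π (eps (i + 1) + eps (i - 1) - 2 • eps i) = 0 :=
      (QuotientAddGroup.eq_zero_iff _).2 hmem
    have h2 : c (i + 1) + c (i - 1) - 2 • c i = 0 := by
      rw [map_sub, map_add, map_nsmul] at h0; exact h0
    have h3 : c (i + 1) - c i - (c i - c (i - 1)) = c (i + 1) + c (i - 1) - 2 • c i := by
      abel
    exact sub_eq_zero.1 (h3.trans h2)
  set t := c 1 - c 0 with ht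
  have step : ∀ k : ℕ, c ((k : ZMod n) + 1) - c (k : ZMod n) = t := by
    intro k
    induction k with
    | zero => simp [ht]
    | succ k ih =>
        have h1 : ((k + 1 : ℕ) : ZMod n) = (k : ZMod n) + 1 := by push_cast; ring
        rw [h1]
        have hr := rel ((k : ZMod n) + 1)
        rw [add_sub_cancel_right] at hr
        rw [hr, ih]
  have path : ∀ k : ℕ, c (k : ZMod n) = c 0 + k • t := by
    intro k
    induction k with
    | zero => simp
    | succ k ih =>
        have h1 : ((k + 1 : ℕ) : ZMod n) = (k : ZMod n) + 1 := by push_cast; ring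
        rw [h1, ← sub_add_cancel (c ((k : ZMod n) + 1)) (c (k : ZMod n)), step k, ih,
          succ_nsmul]
        abel
  have hnt : n • t = 0 := by
    have hp := path n
    rw [ZMod.natCast_self] at hp
    exact (left_eq_add.1 hp)
  have hdec : F = ∑ i : ZMod n, F i • eps i := by
    funext j
    simp only [Finset.sum_apply, Pi.smul_apply, eps, smul_eq_mul, mul_ite, mul_one, mul_zero]
    rw [Finset.sum_ite_eq Finset.univ j F]
    simp
  have hπF : π F = ∑ i : ZMod n, F i • c i := by
    conv_lhs => rw [hdec]
    rw [map_sum]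
    exact Finset.sum_congr rfl fun i _ => map_zsmul π _ _
  have hvalc : ∀ i : ZMod n, c i = c 0 + (i.val : ℤ) • t := by
    intro i
    have h : ((i.val : ℕ) : ZMod n) = i := by rw [ZMod.natCast_val, ZMod.cast_id]
    conv_lhs => rw [← h]
    rw [path i.val, natCast_zsmul]
  set m : ℤ := ∑ i : ZMod n, F i * (i.val : ℤ) with hm
  have hπF2 : π F = 0 := by
    rw [hπF]
    have : ∀ i : ZMod n, F i • c i = F i • c 0 + (F i * (i.val : ℤ)) • t := by
      intro i
      rw [hvalc i]; module
    rw [Finset.sum_congr rfl fun i _ => this i, Finset.sum_add_distrib,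
      smul_sum, smul_sum, show (∑ i : ZMod n, F i) = 0 from hD, zero_smul, zero_add]
    have hcast : ((m : ℤ) : ZMod n) = Mu F := by
      rw [hm, Mu]
      push_cast
      exact Finset.sum_congr rfl fun i _ => by
        rw [ZMod.natCast_val, ZMod.cast_id, mul_comm]
    have hdvd : (n : ℤ) ∣ m := (ZMod.intCast_zmod_eq_zero_iff_dvd m n).1 (by rw [hcast, hM])
    obtain ⟨k, hk⟩ := hdvd
    rw [← hm, hk, mul_comm, mul_smul, natCast_zsmul, hnt, smul_zero]
  obtain ⟨y, hy⟩ := (QuotientAddGroup.eq_zero_iff F).1 hπF2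
  exact ⟨y, hy.symm⟩

lemma Mu_zero : Mu (fun _ : ZMod n => (0 : ℤ)) = 0 := by simp [Mu]

end CycleAux


namespace CycleProof

open Multigraph

lemma closed_reachable (G : Multigraph V) (S : Set V)
    (hS : ∀ a b, G.toSimple.Adj a b → a ∈ S → b ∈ S) :
    ∀ (u v : V), G.toSimple.Walk u v → u ∈ S → v ∈ S := by
  intro u v pw
  induction pw with
  | nil => exact id
  | cons hab pw ih => intro hu; exact ih (hS _ _ hab hu)

lemma e_le_one (G : Multigraph V) (hC : G.IsCycleGraph) (hcard : 3 ≤ Fintype.card V) :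
    ∀ u v, G.e u v ≤ 1 := by
  intro u v
  by_contra huv
  push_neg at huv
  have huvne : u ≠ v := by
    intro h; rw [h, G.loopless v] at huv; omega
  have key : ∀ a b : V, 2 ≤ G.e a b → ∀ w, w ≠ b → G.e a w = 0 := by
    intro a b hab w hw
    have hsum : ∑ w', G.e a w' = 2 := hC.2 a
    have hsub : ({b, w} : Finset V) ⊆ Finset.univ := Finset.subset_univ _
    have := Finset.sum_le_sum_of_subset hsub (f := fun w' => G.e a w')
    rw [Finset.sum_pair (Ne.symm hw)] at this
    simp only [hsum] at this
    omega
  -- the set {u, v} is closed under adjacency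
  have hclosed : ∀ a b, G.toSimple.Adj a b → a ∈ ({u, v} : Set V) → b ∈ ({u, v} : Set V) := by
    intro a b hab ha
    rcases ha with ha | ha
    · subst ha
      by_contra hb
      simp only [Set.mem_insert_iff, Set.mem_singleton_iff] at hb
      push_neg at hb
      exact hab (key a v huv b hb.2)
    · simp only [Set.mem_singleton_iff] at ha
      subst ha
      by_contra hb
      simp only [Set.mem_insert_iff, Set.mem_singleton_iff] at hb
      push_neg at hb
      have h2 : 2 ≤ G.e a u := by rw [G.symm]; exact huv
      exact hab (key a u h2 b hb.1)
  -- a third vertex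
  have hex : ∃ z : V, z ≠ u ∧ z ≠ v := by
    by_contra h
    push_neg at h
    have hsub : (Finset.univ : Finset V) ⊆ {u, v} := by
      intro z _
      rcases Classical.em (z = u) with h1 | h1
      · simp [h1]
      · simp [h z h1]
    have := Finset.card_le_card hsub
    have h2 : ({u, v} : Finset V).card ≤ 2 := Finset.card_insert_le _ _ |>.trans (by simp)
    simp only [Finset.card_univ] at this
    omega
  obtain ⟨z, hzu, hzv⟩ := hex
  have hconn : G.toSimple.Connected := hC.1
  obtain ⟨pw⟩ := hconn.preconnected u z
  have := closed_reachable G {u, v} hclosed u z pw (by simp)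
  rcases this with h | h
  · exact hzu h
  · exact hzv h

lemma two_nbrs (G : Multigraph V) (hC : G.IsCycleGraph) (hle : ∀ u v, G.e u v ≤ 1) (v : V) :
    ∃ a b : V, a ≠ b ∧ G.e v a = 1 ∧ G.e v b = 1 ∧
      ∀ w, G.e v w ≠ 0 → w = a ∨ w = b := by
  classical
  have hsum : ∑ u, G.e v u = 2 := hC.2 v
  set N : Finset V := Finset.univ.filter (fun u => G.e v u = 1) with hN
  have hcongr : ∀ u ∈ Finset.univ, G.e v u = if G.e v u = 1 then 1 else 0 := by
    intro u _
    have := hle v u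
    split <;> omega
  have hsum2 : (∑ u, if G.e v u = 1 then 1 else 0) = 2 := by
    rw [← Finset.sum_congr rfl hcongr]; exact hsum
  have hcard : N.card = 2 := by
    rw [hN, ← hsum2]
    rw [Finset.card_filter]
  obtain ⟨a, b, hab, hNab⟩ := Finset.card_eq_two.1 hcard
  refine ⟨a, b, hab, ?_, ?_, ?_⟩
  · have : a ∈ N := by rw [hNab]; simp
    simpa [hN] using this
  · have : b ∈ N := by rw [hNab]; simp
    simpa [hN] using this
  · intro w hw
    have hw1 : G.e v w = 1 := by have := hle v w; omega
    have : w ∈ N := by simp [hN, hw1]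
    rw [hNab] at this
    simpa using this


section Bridge

open CycleAux

lemma degree_lapApply (G : Multigraph V) (x : V → ℤ) : degree (G.lapApply x) = 0 := by
  unfold degree lapApply
  rw [Finset.sum_sub_distrib]
  have h1 : ∑ v, x v * (G.vdeg v : ℤ) = ∑ v, ∑ u, x v * (G.e v u : ℤ) := by
    apply Finset.sum_congr rfl
    intro v _
    rw [Multigraph.vdeg]
    push_cast
    rw [Finset.mul_sum]
  rw [h1, Finset.sum_comm (f := fun v u => x u * (G.e u v : ℤ))]
  exact sub_self _

lemma degree_add (f g : V → ℤ) : degree (f + g) = degree f + degree g := by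
  simp [degree, Finset.sum_add_distrib]

lemma degree_sub (f g : V → ℤ) : degree (f - g) = degree f - degree g := by
  simp [degree, Finset.sum_sub_distrib]

lemma eff_deg_zero (l : V → ℤ) (h : Effective l) (h0 : degree l = 0) : l = 0 := by
  funext v
  have := (Finset.sum_eq_zero_iff_of_nonneg (fun u _ => h u)).1 h0
  exact this v (Finset.mem_univ v)

variable {n : ℕ} [NeZero n]

lemma lap_transfer (G : Multigraph V) (hC : G.IsCycleGraph) (q : ZMod n ≃ V)
    (hq : ∀ i j, G.e (q i) (q j) =
      (if j = i + 1 then 1 else 0) + (if j = i - 1 then 1 else 0))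
    (hn2 : (2 : ZMod n) ≠ 0)
    (x : V → ℤ) (i : ZMod n) :
    G.lapApply x (q i) = lap' (fun j => x (q j)) i := by
  unfold Multigraph.lapApply lap'
  have hdeg : (G.vdeg (q i) : ℤ) = 2 := by rw [hC.2]; norm_num
  have hsum : ∑ u, x u * (G.e u (q i) : ℤ) = x (q (i + 1)) + x (q (i - 1)) := by
    rw [← Equiv.sum_comp q (fun u => x u * (G.e u (q i) : ℤ))]
    have hterm : ∀ j : ZMod n, x (q j) * (G.e (q j) (q i) : ℤ)
        = (if j = i + 1 then x (q j) else 0) + (if j = i - 1 then x (q j) else 0) := by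
      intro j
      rw [G.symm, hq i j]
      push_cast
      split_ifs <;> ring
    rw [Finset.sum_congr rfl (fun j _ => hterm j), Finset.sum_add_distrib,
      Finset.sum_ite_eq' Finset.univ (i + 1) (fun j => x (q j)),
      Finset.sum_ite_eq' Finset.univ (i - 1) (fun j => x (q j))]
    simp
  rw [hdeg, hsum]
  ring

lemma degree_comp (q : ZMod n ≃ V) (f : V → ℤ) : degree f = Dg (fun i => f (q i)) :=
  (Equiv.sum_comp q f).symm

lemma linEquiv_iff (G : Multigraph V) (hC : G.IsCycleGraph) (q : ZMod n ≃ V)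
    (hq : ∀ i j, G.e (q i) (q j) =
      (if j = i + 1 then 1 else 0) + (if j = i - 1 then 1 else 0))
    (hn2 : (2 : ZMod n) ≠ 0)
    (f g : V → ℤ) :
    G.LinEquiv f g ↔ degree f = degree g ∧
      Mu (fun i => f (q i)) = Mu (fun i => g (q i)) := by
  constructor
  · rintro ⟨x, rfl⟩
    have hfun : (fun i => (f + G.lapApply x) (q i))
        = (fun i => f (q i)) + lap' (fun j => x (q j)) := by
      funext i
      simp only [Pi.add_apply]
      rw [lap_transfer G hC q hq hn2 x i]
    constructor
    · rw [degree_add, degree_lapApply, add_zero]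
    · rw [show (fun i => (f + G.lapApply x) (q i)) = _ from hfun]
      have : Mu ((fun i => f (q i)) + lap' fun j => x (q j))
          = Mu (fun i => f (q i)) + Mu (lap' fun j => x (q j)) := by
        unfold Mu
        rw [← Finset.sum_add_distrib]
        apply Finset.sum_congr rfl
        intro i _
        simp only [Pi.add_apply]
        push_cast
        ring
      rw [this, Mu_lap', add_zero]
  · rintro ⟨hd, hm⟩
    have hD : Dg ((fun i => g (q i)) - (fun i => f (q i))) = 0 := by
      rw [Dg_sub, ← degree_comp q, ← degree_comp q, hd, sub_self]
    have hM : Mu ((fun i => g (q i)) - (fun i => f (q i))) = 0 := by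
      rw [Mu_sub, hm, sub_self]
    obtain ⟨y, hy⟩ := lap'_exists _ hD hM
    refine ⟨fun v => y (q.symm v), ?_⟩
    funext v
    have hv : v = q (q.symm v) := (q.apply_symm_apply v).symm
    rw [hv]
    set i := q.symm v
    have := congrFun hy i
    simp only [Pi.sub_apply] at this
    rw [Pi.add_apply, lap_transfer G hC q hq hn2 _ i]
    have hcomp : (fun j => y (q.symm (q j))) = y := by
      funext j; rw [q.symm_apply_apply]
    rw [show (fun j => (fun v => y (q.symm v)) (q j)) = y from hcomp]
    omega

end Bridge

lemma cycle_equiv (G : Multigraph V) (hC : G.IsCycleGraph) (hcard : 3 ≤ Fintype.card V) :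
    ∃ q : ZMod (Fintype.card V) ≃ V, ∀ i j : ZMod (Fintype.card V),
      G.e (q i) (q j) = (if j = i + 1 then 1 else 0) + (if j = i - 1 then 1 else 0) := by
  classical
  set n := Fintype.card V with hn
  haveI : NeZero n := ⟨by omega⟩
  haveI : Nonempty V := Fintype.card_pos_iff.1 (by omega)
  clear_value n
  have hcardV : 3 ≤ Fintype.card V := by rw [← hn]; exact hcard
  have hle := e_le_one G hC hcardV
  choose na nb hab ha hb huniq using two_nbrs G hC hle
  set other : V → V → V := fun v w => if na v = w then nb v else na v with hother
  have hoth1 : ∀ v w, G.e v (other v w) = 1 := by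
    intro v w
    rw [hother]
    dsimp only
    split
    · exact hb v
    · exact ha v
  have hoth_ne : ∀ v w, other v w ≠ w := by
    intro v w
    rw [hother]
    dsimp only
    split
    · rename_i h; rw [← h]; exact (hab v).symm
    · rename_i h; exact h
  have hoth_uniq : ∀ v w z, G.e v w ≠ 0 → G.e v z ≠ 0 → z ≠ w → z = other v w := by
    intro v w z hw hz hzw
    rcases huniq v w hw with hw1 | hw1 <;> rcases huniq v z hz with hz1 | hz1 <;>
      rw [hother] <;> dsimp only
    · exact absurd (hz1.trans hw1.symm) hzw
    · rw [if_pos hw1.symm]; exact hz1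
    · rw [if_neg (fun h => hab v (h.trans hw1))]; exact hz1
    · exact absurd (hz1.trans hw1.symm) hzw
  -- the walk around the cycle
  set v0 : V := Classical.arbitrary V with hv0
  set P : ℕ → V × V := fun k => Nat.rec (v0, na v0) (fun _ q => (q.2, other q.2 q.1)) k with hP
  set p : ℕ → V := fun k => (P k).1 with hp
  have hpsucc : ∀ k, p (k + 1) = (P k).2 := fun k => rfl
  have hprec : ∀ k, p (k + 2) = other (p (k + 1)) (p k) := fun k => rfl
  have hadj : ∀ k, G.e (p k) (p (k + 1)) = 1 := by
    intro k
    cases k with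
    | zero => exact ha v0
    | succ k => rw [hprec k]; exact hoth1 _ _
  have hne2 : ∀ k, p (k + 2) ≠ p k := by
    intro k; rw [hprec k]; exact hoth_ne _ _
  have hne1 : ∀ k, p k ≠ p (k + 1) := by
    intro k h
    have := hadj k
    rw [← h, G.loopless] at this
    exact absurd this (by omega)
  have huniqp : ∀ k z, G.e (p (k + 1)) z ≠ 0 → z = p k ∨ z = p (k + 2) := by
    intro k z hz
    by_cases h : z = p k
    · exact Or.inl h
    · refine Or.inr ?_
      rw [hprec k]
      refine hoth_uniq _ _ _ ?_ hz h
      rw [G.symm]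
      rw [hadj k]
      omega
  -- first repetition
  have hrep : ∃ m, ∃ j < m, p m = p j := by
    obtain ⟨x, hx, y, hy, hxy, hpxy⟩ :=
      Finset.exists_ne_map_eq_of_card_lt_of_maps_to
        (s := Finset.range (n + 1)) (t := Finset.univ) (f := p)
        (by simp [Finset.card_univ, ← hn]) (fun a _ => Finset.mem_univ _)
    rcases lt_or_gt_of_ne hxy with h | h
    · exact ⟨y, x, h, hpxy.symm⟩
    · exact ⟨x, y, h, hpxy⟩
  set m := Nat.find hrep with hm
  have hspec : ∃ j < m, p m = p j := Nat.find_spec hrep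
  have hinj : ∀ a b, a < b → b < m → p a ≠ p b := by
    intro a b h1 h2 hne
    exact Nat.find_min hrep h2 ⟨a, h1, hne.symm⟩
  clear_value m
  clear hm
  obtain ⟨j, hjm, hpmj⟩ := hspec
  have hm1 : 1 ≤ m := by omega
  have hm2 : 2 ≤ m := by
    rcases Nat.lt_or_ge m 2 with h | h
    · interval_cases m
      · have : j = 0 := by omega
        subst this
        exact absurd hpmj.symm (hne1 0)
    · exact h
  have hj0 : j = 0 := by
    by_contra hj
    obtain ⟨jj, rfl⟩ : ∃ jj, j = jj + 1 := ⟨j - 1, by omega⟩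
    obtain ⟨mm, rfl⟩ : ∃ mm, m = mm + 1 := ⟨m - 1, by omega⟩
    have hadjm : G.e (p (jj + 1)) (p mm) ≠ 0 := by
      rw [← hpmj, G.symm, hadj mm]
      omega
    rcases huniqp jj (p mm) hadjm with h | h
    · rcases Nat.lt_trichotomy mm jj with h1 | h1 | h1
      · exact hinj mm jj h1 (by omega) h
      · omega
      · exact hinj jj mm h1 (by omega) h.symm
    · rcases Nat.lt_trichotomy (jj + 2) (mm + 1) with h1 | h1 | h1
      · rcases Nat.lt_trichotomy mm (jj + 2) with h2 | h2 | h2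
        · exact hinj mm (jj + 2) h2 h1 h
        · exact hne2 (jj + 1) (by rw [show jj + 1 + 2 = mm + 1 by omega]; exact hpmj)
        · exact hinj (jj + 2) mm h2 (by omega) h.symm
      · -- jj + 2 = mm + 1, so p mm = p (mm + 1)
        have : p mm = p (mm + 1) := by rw [← h1]; exact h
        exact hne1 mm this
      · omega
  subst hj0
  have hm3 : 3 ≤ m := by
    rcases Nat.lt_or_ge m 3 with h | h
    · interval_cases m
      · exact absurd hpmj (hne2 0)
    · exact h
  -- p (m + 1) = p 1
  have hmm1 : m - 1 + 1 = m := by omega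
  have hadj0 : G.e (p 0) (p 1) = 1 := by have := hadj 0; simpa using this
  have hpm1 : p (m + 1) = p 1 := by
    have h1 : G.e (p m) (p 1) ≠ 0 := by
      rw [hpmj, hadj0]; omega
    have h2 : G.e (p m) (p (m - 1)) ≠ 0 := by
      have h2' := hadj (m - 1)
      rw [hmm1] at h2'
      rw [G.symm, h2']; omega
    have h3 : p 1 ≠ p (m - 1) := by
      intro h
      exact hinj 1 (m - 1) (by omega) (by omega) h
    have hothis := hoth_uniq (p m) (p (m - 1)) (p 1) h2 h1 h3
    rw [hothis, show m + 1 = (m - 1) + 2 by omega, hprec (m - 1), hmm1]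
  -- the image of p on [0, m) is closed under adjacency, hence everything
  have hclosed : ∀ a b, G.toSimple.Adj a b →
      a ∈ {v | ∃ k < m, p k = v} → b ∈ {v | ∃ k < m, p k = v} := by
    intro a b hadj' ha'
    obtain ⟨k, hkm, rfl⟩ := ha'
    have hbne : G.e (p k) b ≠ 0 := hadj'
    cases k with
    | zero =>
        have hbne' : G.e (p (m - 1 + 1)) b ≠ 0 := by rwa [hmm1, hpmj]
        rcases huniqp (m - 1) b hbne' with h | h
        · exact ⟨m - 1, by omega, h.symm⟩
        · rw [show m - 1 + 2 = m + 1 by omega, hpm1] at h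
          exact ⟨1, by omega, h.symm⟩
    | succ k =>
        rcases huniqp k b hbne with h | h
        · exact ⟨k, by omega, h.symm⟩
        · rcases Nat.lt_or_ge (k + 2) m with h1 | h1
          · exact ⟨k + 2, h1, h.symm⟩
          · have : k + 2 = m := by omega
            rw [this, hpmj] at h
            exact ⟨0, by omega, h.symm⟩
  have hsurj : ∀ v : V, ∃ k < m, p k = v := by
    intro v
    have hconn : G.toSimple.Connected := hC.1
    obtain ⟨pw⟩ := hconn.preconnected (p 0) v
    exact closed_reachable G _ hclosed (p 0) v pw ⟨0, by omega, rfl⟩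
  -- m = n
  have hmn : m = n := by
    have himg : (Finset.range m).image p = Finset.univ := by
      apply Finset.eq_univ_of_forall
      intro v
      obtain ⟨k, hk, hpk⟩ := hsurj v
      exact Finset.mem_image.2 ⟨k, Finset.mem_range.2 hk, hpk⟩
    have hcardimg : ((Finset.range m).image p).card = m := by
      rw [Finset.card_image_of_injOn, Finset.card_range]
      intro a ha' b hb' hpab
      simp only [Finset.coe_range, Set.mem_Iio] at ha' hb'
      rcases Nat.lt_trichotomy a b with h | h | h
      · exact absurd hpab (hinj a b h hb')
      · exact h
      · exact absurd hpab.symm (hinj b a h ha')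
    rw [himg, Finset.card_univ] at hcardimg
    rw [hn]
    exact hcardimg.symm
  -- periodicity
  have hper2 : ∀ k, p (k + m) = p k ∧ p (k + m + 1) = p (k + 1) := by
    intro k
    induction k with
    | zero => exact ⟨by simpa using hpmj, by simpa using hpm1⟩
    | succ k ih =>
        constructor
        · rw [show k + 1 + m = k + m + 1 by omega]; exact ih.2
        · rw [show k + 1 + m + 1 = (k + m) + 2 by omega, hprec (k + m), ih.1, ih.2,
            ← hprec k]
  have hper : ∀ k, p (k + m) = p k := fun k => (hper2 k).1
  have hmul : ∀ a k, p (k + a * m) = p k := by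
    intro a
    induction a with
    | zero => intro k; simp
    | succ a ih =>
        intro k
        rw [show k + (a + 1) * m = (k + a * m) + m by ring, hper, ih]
  have hpmod : ∀ k, p (k % m) = p k := by
    intro k
    have hdm : k % m + (k / m) * m = k := by
      rw [Nat.mul_comm]; exact Nat.mod_add_div k m
    calc p (k % m) = p (k % m + (k / m) * m) := (hmul _ _).symm
      _ = p k := by rw [hdm]
  -- translate periodicity to n
  have hper' : ∀ k, p (k + n) = p k := by rw [← hmn]; exact hper
  have hpmod' : ∀ k, p (k % n) = p k := by rw [← hmn]; exact hpmod
  have hq0inj : Function.Injective (fun i : ZMod n => p i.val) := by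
    intro i j hij
    simp only at hij
    have hi : i.val < n := ZMod.val_lt i
    have hj : j.val < n := ZMod.val_lt j
    have : i.val = j.val := by
      rcases Nat.lt_trichotomy i.val j.val with h | h | h
      · exact absurd hij (hinj _ _ h (by omega))
      · exact h
      · exact absurd hij.symm (hinj _ _ h (by omega))
    exact ZMod.val_injective n this
  have hq0surj : Function.Surjective (fun i : ZMod n => p i.val) := by
    intro v
    obtain ⟨k, hk, hpk⟩ := hsurj v
    refine ⟨(k : ZMod n), ?_⟩
    simp only [ZMod.val_natCast]
    rw [Nat.mod_eq_of_lt (by omega)]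
    exact hpk
  refine ⟨Equiv.ofBijective _ ⟨hq0inj, hq0surj⟩, ?_⟩
  set q : ZMod n ≃ V := Equiv.ofBijective _ ⟨hq0inj, hq0surj⟩ with hq
  have hqdef : ∀ i : ZMod n, q i = p i.val := fun i => rfl
  have hq_cast : ∀ k : ℕ, q (k : ZMod n) = p k := by
    intro k
    rw [hqdef, ZMod.val_natCast, hpmod']
  have hival : ∀ i : ZMod n, ((i.val : ℕ) : ZMod n) = i := by
    intro i
    rw [ZMod.natCast_val, ZMod.cast_id]
  have hq_succ : ∀ i : ZMod n, q (i + 1) = p (i.val + 1) := by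
    intro i
    have : i + 1 = ((i.val + 1 : ℕ) : ZMod n) := by push_cast [hival]; ring
    rw [this, hq_cast]
  have hq_pred : ∀ i : ZMod n, q (i - 1) = p (i.val + (n - 1)) := by
    intro i
    have h1 : ((n - 1 : ℕ) : ZMod n) = -1 := by
      have : ((n - 1 : ℕ) : ZMod n) = (n : ZMod n) - 1 := by
        push_cast [Nat.cast_sub (by omega : 1 ≤ n)]; ring
      rw [this, ZMod.natCast_self, zero_sub]
    have : i - 1 = ((i.val + (n - 1) : ℕ) : ZMod n) := by
      push_cast [hival, h1]; ring
    rw [this, hq_cast]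
  -- adjacency facts
  have hA : ∀ i : ZMod n, G.e (q i) (q (i + 1)) = 1 := by
    intro i
    rw [hqdef, hq_succ]
    exact hadj i.val
  have hB : ∀ i : ZMod n, G.e (q i) (q (i - 1)) = 1 := by
    intro i
    rw [G.symm, hq_pred, hqdef]
    have h1 : p i.val = p (i.val + (n - 1) + 1) := by
      rw [show i.val + (n - 1) + 1 = i.val + n by omega, hper']
    rw [h1]
    exact hadj (i.val + (n - 1))
  have hCuniq : ∀ (i : ZMod n) (z : V), G.e (q i) z ≠ 0 → z = q (i + 1) ∨ z = q (i - 1) := by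
    intro i z hz
    have h1 : q i = p (i.val + (n - 1) + 1) := by
      rw [show i.val + (n - 1) + 1 = i.val + n by omega, hper', hqdef]
    rw [h1] at hz
    rcases huniqp (i.val + (n - 1)) z hz with h | h
    · exact Or.inr (by rw [hq_pred]; exact h)
    · refine Or.inl ?_
      rw [show i.val + (n - 1) + 2 = (i.val + 1) + n by omega, hper'] at h
      rw [hq_succ]
      exact h
  have hne_pm : ∀ i : ZMod n, i + 1 ≠ i - 1 := by
    intro i h
    have h2 : (2 : ZMod n) = 0 := by
      have := sub_eq_zero.2 h
      rw [show i + 1 - (i - 1) = 2 by ring] at this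
      exact this
    have h3 : ((2 : ℕ) : ZMod n) = 0 := by push_cast; exact h2
    have := (ZMod.natCast_eq_zero_iff 2 n).1 h3
    have := Nat.le_of_dvd (by omega) this
    omega
  intro i j
  by_cases h1 : j = i + 1
  · subst h1
    rw [if_pos rfl, if_neg (hne_pm i), hA]
  · by_cases h2 : j = i - 1
    · subst h2
      rw [if_neg (by intro h; exact hne_pm i h.symm), if_pos rfl, hB]
    · rw [if_neg h1, if_neg h2]
      by_contra h
      rcases hCuniq i (q j) (by simpa using h) with h3 | h3
      · exact h1 (q.injective h3)
      · exact h2 (q.injective h3)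

end CycleProof

open CycleProof CycleAux

/-- the rank of a divisor on a cycle with `n ≥ 3` vertices:
`-1` if `deg f ≤ -1`; `-1` if `deg f = 0` and `f` is bad; `0` if
`deg f = 0` and `f` is good; `deg f − 1` if `deg f ≥ 1`. -/
theorem rank_cycle (G : Multigraph V)
    (hC : G.IsCycleGraph) (hcard : 3 ≤ Fintype.card V) (f : V → ℤ) :
    (degree f ≤ -1 → G.rank f = -1) ∧
    (degree f = 0 → G.Bad f → G.rank f = -1) ∧
    (degree f = 0 → G.Good f → G.rank f = 0) ∧
    (1 ≤ degree f → G.rank f = degree f - 1) := by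
  classical
  haveI : NeZero (Fintype.card V) := ⟨by omega⟩
  obtain ⟨q, hq⟩ := cycle_equiv G hC hcard
  have hn2 : (2 : ZMod (Fintype.card V)) ≠ 0 := by
    intro h
    have h3 : ((2 : ℕ) : ZMod (Fintype.card V)) = 0 := by push_cast; exact h
    have h4 := (ZMod.natCast_eq_zero_iff 2 _).1 h3
    have := Nat.le_of_dvd (by omega) h4
    omega
  have h1n : (1 : ZMod (Fintype.card V)) ≠ 0 := by
    intro h
    have h3 : ((1 : ℕ) : ZMod (Fintype.card V)) = 0 := by push_cast; exact h
    have h4 := (ZMod.natCast_eq_zero_iff 1 _).1 h3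
    have := Nat.le_of_dvd (by omega) h4
    omega
  have hlin := linEquiv_iff G hC q hq hn2
  have hdeg_lin : ∀ g h : V → ℤ, G.LinEquiv g h → degree g = degree h := by
    rintro g h ⟨x, rfl⟩
    rw [degree_add, degree_lapApply, add_zero]
  have hLeff_nonneg : ∀ h : V → ℤ, G.LEffective h → 0 ≤ degree h := by
    rintro h ⟨g, hgh, hg⟩
    rw [hdeg_lin h g hgh]
    exact Finset.sum_nonneg (fun v _ => hg v)
  -- the standard effective divisors
  set mk : ℤ → ZMod (Fintype.card V) → (V → ℤ) := fun r s v =>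
    (if q.symm v = 0 then r - 1 else 0) + (if q.symm v = s then 1 else 0) with hmk
  have hmk_comp : ∀ (r : ℤ) (s i : ZMod (Fintype.card V)),
      mk r s (q i) = (if i = 0 then r - 1 else 0) + (if i = s then 1 else 0) := by
    intro r s i
    simp [hmk]
  have hmk_eff : ∀ (r : ℤ) s, 1 ≤ r → Effective (mk r s) := by
    intro r s hr v
    simp only [hmk]
    split_ifs <;> omega
  have hmk_deg : ∀ (r : ℤ) s, degree (mk r s) = r := by
    intro r s
    rw [degree, ← Equiv.sum_comp q (mk r s)]
    rw [Finset.sum_congr rfl (fun i _ => hmk_comp r s i), Finset.sum_add_distrib,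
      Finset.sum_ite_eq' Finset.univ (0 : ZMod (Fintype.card V)) (fun _ => r - 1),
      Finset.sum_ite_eq' Finset.univ s (fun _ => (1 : ℤ))]
    simp
  have hmk_mu : ∀ (r : ℤ) s, Mu (fun i => mk r s (q i)) = s := by
    intro r s
    unfold CycleAux.Mu
    have hterm : ∀ i : ZMod (Fintype.card V),
        (i : ZMod (Fintype.card V)) * ((mk r s (q i) : ℤ) : ZMod (Fintype.card V))
        = (if i = 0 then i * ((r - 1 : ℤ) : ZMod (Fintype.card V)) else 0)
          + (if i = s then i * ((1 : ℤ) : ZMod (Fintype.card V)) else 0) := by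
      intro i
      rw [hmk_comp]
      push_cast
      split_ifs <;> ring
    rw [Finset.sum_congr rfl (fun i _ => hterm i), Finset.sum_add_distrib,
      Finset.sum_ite_eq' Finset.univ (0 : ZMod (Fintype.card V)) _,
      Finset.sum_ite_eq' Finset.univ s _]
    simp
  -- every divisor of degree ≥ 1 is L-effective
  have hge1 : ∀ h : V → ℤ, 1 ≤ degree h → G.LEffective h := by
    intro h hd
    refine ⟨mk (degree h) (Mu (fun i => h (q i))), ?_, hmk_eff _ _ hd⟩
    rw [hlin]
    exact ⟨(hmk_deg _ _).symm, (hmk_mu _ _).symm⟩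
  -- degree-0 divisors
  have hdeg0 : ∀ h : V → ℤ, degree h = 0 → (G.LEffective h ↔ G.LinEquiv h 0) := by
    intro h hd
    constructor
    · rintro ⟨g, hgh, hg⟩
      have hdg : degree g = 0 := by rw [← hdeg_lin h g hgh]; exact hd
      rw [eff_deg_zero g hg hdg] at hgh
      exact hgh
    · intro hh
      exact ⟨0, hh, fun v => le_refl 0⟩
  -- counterexamples when r exceeds the degree
  have hcex : ∀ r : ℤ, 0 ≤ r → degree f < r →
      ¬(∀ l, Effective l → degree l = r → G.LEffective (f - l)) := by
    intro r hr hfr hP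
    by_cases h0 : r = 0
    · subst h0
      have h1 := hP 0 (fun v => le_refl 0) (by simp [degree])
      rw [sub_zero] at h1
      have := hLeff_nonneg f h1
      omega
    · have h1 := hP (mk r 0) (hmk_eff r 0 (by omega)) (hmk_deg r 0)
      have h2 := hLeff_nonneg _ h1
      rw [degree_sub, hmk_deg] at h2
      omega
  -- a counterexample at r = degree f, when degree f ≥ 1
  have hbadl : 1 ≤ degree f →
      ∃ l, Effective l ∧ degree l = degree f ∧ ¬ G.LEffective (f - l) := by
    intro hd
    set s : ZMod (Fintype.card V) := Mu (fun i => f (q i)) - 1 with hs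
    refine ⟨mk (degree f) s, hmk_eff _ _ hd, hmk_deg _ _, ?_⟩
    intro hLE
    have hdfl : degree (f - mk (degree f) s) = 0 := by
      rw [degree_sub, hmk_deg, sub_self]
    have hlin0 := (hdeg0 _ hdfl).1 hLE
    rw [hlin] at hlin0
    obtain ⟨hd0, hm0⟩ := hlin0
    have hfl : (fun i => (f - mk (degree f) s) (q i))
        = (fun i => f (q i)) - (fun i => mk (degree f) s (q i)) := by
      funext i; simp
    rw [hfl, Mu_sub, hmk_mu] at hm0
    have hz : (fun i => (0 : V → ℤ) (q i)) = (fun _ : ZMod (Fintype.card V) => (0 : ℤ)) := by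
      funext i; simp
    rw [hz, Mu_zero] at hm0
    apply h1n
    rw [show (1 : ZMod (Fintype.card V)) = Mu (fun i => f (q i)) - s by rw [hs]; ring]
    exact hm0
  -- computing the supremum
  have hrank : ∀ b : ℤ, -1 ≤ b →
      ({-1} ∪ {r : ℤ | 0 ≤ r ∧
        ∀ l : V → ℤ, Effective l → degree l = r → G.LEffective (f - l)})
        = Set.Icc (-1) b → G.rank f = b := by
    intro b hb hset
    rw [Multigraph.rank, hset, csSup_Icc hb]
  refine ⟨?_, ?_, ?_, ?_⟩
  · -- degree ≤ -1
    intro hneg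
    apply hrank (-1) le_rfl
    ext r
    simp only [Set.mem_union, Set.mem_singleton_iff, Set.mem_setOf_eq, Set.mem_Icc]
    constructor
    · rintro (rfl | ⟨hr, hP⟩)
      · exact ⟨le_rfl, le_rfl⟩
      · exact absurd hP (hcex r hr (by omega))
    · intro hr
      left; omega
  · -- degree 0, bad
    intro hdeg hbad
    apply hrank (-1) le_rfl
    ext r
    simp only [Set.mem_union, Set.mem_singleton_iff, Set.mem_setOf_eq, Set.mem_Icc]
    constructor
    · rintro (rfl | ⟨hr, hP⟩)
      · exact ⟨le_rfl, le_rfl⟩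
      · by_cases h0 : r = 0
        · subst h0
          have h1 := hP 0 (fun v => le_refl 0) (by simp [degree])
          rw [sub_zero] at h1
          exact absurd ((hdeg0 f hdeg).1 h1) hbad.2
        · exact absurd hP (hcex r hr (by omega))
    · intro hr
      left; omega
  · -- degree 0, good
    intro hdeg hgood
    apply hrank 0 (by omega)
    ext r
    simp only [Set.mem_union, Set.mem_singleton_iff, Set.mem_setOf_eq, Set.mem_Icc]
    constructor
    · rintro (rfl | ⟨hr, hP⟩)
      · constructor <;> omega
      · by_cases h0 : r = 0
        · constructor <;> omega
        · exact absurd hP (hcex r hr (by omega))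
    · intro hr
      rcases (by omega : r = -1 ∨ r = 0) with rfl | rfl
      · left; rfl
      · right
        refine ⟨le_rfl, ?_⟩
        intro l hl hdl
        rw [eff_deg_zero l hl hdl, sub_zero]
        exact (hdeg0 f hdeg).2 hgood.2
  · -- degree ≥ 1
    intro hd
    apply hrank (degree f - 1) (by omega)
    ext r
    simp only [Set.mem_union, Set.mem_singleton_iff, Set.mem_setOf_eq, Set.mem_Icc]
    constructor
    · rintro (rfl | ⟨hr, hP⟩)
      · constructor <;> omega
      · refine ⟨by omega, ?_⟩
        by_contra hgt
        push_neg at hgt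
        by_cases heq : r = degree f
        · obtain ⟨l, hl, hdl, hnl⟩ := hbadl hd
          exact hnl (hP l hl (by omega))
        · exact hcex r hr (by omega) hP
    · intro hr
      rcases (by omega : r = -1 ∨ 0 ≤ r) with rfl | hr0
      · left; rfl
      · right
        refine ⟨hr0, ?_⟩
        intro l hl hdl
        apply hge1
        rw [degree_sub, hdl]
        omega
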